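/- For every α ∈ [0,1]: if there exists a set that has computable density 0 but is not intrinsically small, and there exists a set of intrinsic density α, then there exists a set Z with computable density α such that Z does not have intrinsic density α. -/

import Mathlib

open Filter Topology Classical

/-- `cnt A n = |A ∩ [0,n)|`. -/
noncomputable def cnt (A : Set ℕ) (n : ℕ) : ℕ :=
  ((Finset.range n).filter (· ∈ A)).card

/-- `dens A n = |A ∩ [0,n)| / n`, the density of `A` at `n`. -/
noncomputable def dens (A : Set ℕ) (n : ℕ) : ℝ := (cnt A n : ℝ) / n

/-- `A` has computable density `α`: every total computable strictly increasing
`f : ℕ → ℕ` pulls `A` back to a set of density `α`. -/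
def CompDensity (A : Set ℕ) (α : ℝ) : Prop :=
  ∀ f : ℕ → ℕ, Computable f → StrictMono f →
    Tendsto (dens {n | f n ∈ A}) atTop (𝓝 α)

/-- `A` has intrinsic density `α`: `π(A)` has density `α` for every
computable permutation `π` of `ℕ`. -/
def IntrinsicDensity (A : Set ℕ) (α : ℝ) : Prop :=
  ∀ π : ℕ ≃ ℕ, Computable ⇑π → Tendsto (dens (⇑π '' A)) atTop (𝓝 α)



lemma cnt_succ (A : Set ℕ) (n : ℕ) :
    cnt A (n + 1) = cnt A n + (if n ∈ A then 1 else 0) := by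
  unfold cnt
  rw [Finset.range_add_one, Finset.filter_insert]
  split
  · rw [Finset.card_insert_of_notMem (by simp)]
  · simp

lemma cnt_mono_set {A B : Set ℕ} (h : A ⊆ B) (n : ℕ) : cnt A n ≤ cnt B n := by
  apply Finset.card_le_card
  intro x hx
  simp only [Finset.mem_filter] at *
  exact ⟨hx.1, h hx.2⟩

lemma cnt_le (A : Set ℕ) (n : ℕ) : cnt A n ≤ n := by
  simpa [cnt] using Finset.card_filter_le (Finset.range n) (· ∈ A)

lemma dens_nonneg (A : Set ℕ) (n : ℕ) : 0 ≤ dens A n := by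
  unfold dens; positivity

lemma cnt_disj_union {A B : Set ℕ} (h : ∀ m, ¬ (m ∈ A ∧ m ∈ B)) (n : ℕ) :
    cnt (A ∪ B) n = cnt A n + cnt B n := by
  induction n with
  | zero => simp [cnt]
  | succ n ih =>
      rw [cnt_succ, cnt_succ, cnt_succ, ih]
      by_cases hA : n ∈ A <;> by_cases hB : n ∈ B
      · exact absurd ⟨hA, hB⟩ (h n)
      all_goals (simp [Set.mem_union, hA, hB]; try omega)

lemma cnt_union_le (A B : Set ℕ) (n : ℕ) : cnt (A ∪ B) n ≤ cnt A n + cnt B n := by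
  induction n with
  | zero => simp [cnt]
  | succ n ih =>
      rw [cnt_succ, cnt_succ, cnt_succ]
      by_cases hA : n ∈ A <;> by_cases hB : n ∈ B <;>
        simp [Set.mem_union, hA, hB] <;> omega

lemma dens_le_dens {A B : Set ℕ} {n : ℕ} (h : cnt A n ≤ cnt B n) : dens A n ≤ dens B n := by
  unfold dens
  exact div_le_div_of_nonneg_right (by exact_mod_cast h) (Nat.cast_nonneg n)


/-- number of `m < n` with `b m = false` -/
def cntF (b : ℕ → Bool) : ℕ → ℕ
  | 0 => 0
  | n + 1 => cntF b n + (if b n = false then 1 else 0)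

lemma cntF_le (b : ℕ → Bool) (n : ℕ) : cntF b n ≤ n := by
  induction n with
  | zero => simp [cntF]
  | succ n ih => rw [cntF]; split <;> omega

lemma cntF_mono (b : ℕ → Bool) : Monotone (cntF b) := by
  apply monotone_nat_of_le_succ
  intro n
  rw [cntF]; split <;> omega

lemma cntF_lt (b : ℕ → Bool) {m n : ℕ} (hmn : m < n) (hb : b m = false) :
    cntF b m < cntF b n := by
  have h1 : cntF b (m+1) = cntF b m + 1 := by rw [cntF]; simp [hb]
  have := cntF_mono b (show m + 1 ≤ n from hmn)
  omega

lemma cntF_inj (b : ℕ → Bool) {m n : ℕ} (hm : b m = false) (hn : b n = false)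
    (h : cntF b m = cntF b n) : m = n := by
  rcases lt_trichotomy m n with h' | h' | h'
  · exact absurd h (cntF_lt b h' hm).ne
  · exact h'
  · exact absurd h.symm (cntF_lt b h' hn).ne

/-- discrete IVT: if the count gets above `j`, some `m` with `b m = false` has count exactly `j`. -/
lemma cntF_surj (b : ℕ → Bool) {j n : ℕ} (h : j < cntF b n) :
    ∃ m, b m = false ∧ cntF b m = j := by
  induction n with
  | zero => simp [cntF] at h
  | succ n ih =>
      by_cases h' : j < cntF b n
      · exact ih h'
      · rw [cntF] at h
        rcases hb : b n with _ | _
        · exact ⟨n, hb, by simp [hb] at h; omega⟩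
        · simp [hb] at h; omega

/-- the trues below `n` number `n - cntF b n` -/
lemma cntF_trues (b : ℕ → Bool) (n : ℕ) :
    ((Finset.range n).filter (fun m => b m = true)).card = n - cntF b n := by
  induction n with
  | zero => simp [cntF]
  | succ n ih =>
      rw [Finset.range_add_one, Finset.filter_insert]
      have hle := cntF_le b n
      rcases hb : b n with _ | _
      · rw [if_neg (by simp), ih, cntF, if_pos hb]
        omega
      · rw [if_pos rfl, Finset.card_insert_of_notMem (by simp), ih, cntF,
          if_neg (by simp [hb])]
        omega

lemma cntF_computable {b : ℕ → Bool} (hb : Computable b) : Computable (cntF b) := by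
  have H : Computable₂ (fun (_ : ℕ) (p : ℕ × ℕ) => p.2 + cond (b p.1) 0 1) := by
    have h1 : Computable fun q : ℕ × (ℕ × ℕ) => q.2.2 := Computable.snd.comp Computable.snd
    have h2 : Computable fun q : ℕ × (ℕ × ℕ) => cond (b q.2.1) 0 1 :=
      Computable.cond (hb.comp (Computable.fst.comp Computable.snd)) (Computable.const 0)
        (Computable.const 1)
    exact Computable₂.mk <| Primrec₂.to_comp Primrec.nat_add |>.comp h1 h2
  have := Computable.nat_rec Computable.id (Computable.const 0) H
  apply this.of_eq
  intro n
  induction n with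
  | zero => rfl
  | succ n ih =>
      show (fun y ih => ih + cond (b y) 0 1) n (Nat.rec 0 _ (id n)) = cntF b (n+1)
      rw [cntF]
      simp only at ih
      rw [ih]
      rcases hb' : b n with _|_ <;> simp [hb']


lemma computable_equiv_symm (e : ℕ ≃ ℕ) (he : Computable ⇑e) : Computable ⇑e.symm := by
  have hq : Computable₂ fun (m n : ℕ) => (decide (e n = m)) :=
    Computable₂.mk <| (Primrec₂.to_comp Primrec.eq.decide).comp
      (he.comp Computable.snd) Computable.fst
  have hr := Partrec.rfind hq.partrec₂
  refine hr.of_eq_tot fun m => ?_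
  rw [Nat.mem_rfind]
  constructor
  · simp [Part.mem_some_iff]
  · intro k hk
    refine Part.mem_some_iff.2 ?_
    rw [eq_comm, decide_eq_false_iff_not]
    intro hek
    have : k = e.symm m := by rw [← hek, Equiv.symm_apply_apply]
    omega

lemma computable_getD (l : List ℕ) : Computable (fun k => l.getD k 0) := by
  induction l with
  | nil => exact (Computable.const 0).of_eq (by simp)
  | cons a t ih =>
      have h := Computable.nat_casesOn Computable.id (Computable.const a)
        (show Computable₂ (fun (_ : ℕ) (k : ℕ) => t.getD k 0) from
          Computable₂.mk (ih.comp Computable.snd))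
      exact h.of_eq fun k => by cases k <;> simp

def rangeB (f : ℕ → ℕ) (m : ℕ) : Bool :=
  Nat.rec false (fun k ih => ih || decide (f k = m)) (m + 1)

lemma rangeB_aux (f : ℕ → ℕ) (m : ℕ) : ∀ t : ℕ,
    ((Nat.rec false (fun k ih => ih || decide (f k = m)) t : Bool) = true ↔ ∃ k < t, f k = m)
  | 0 => by simp
  | t + 1 => by
      show (_ || _) = true ↔ _
      rw [Bool.or_eq_true, rangeB_aux f m t]
      simp only [decide_eq_true_eq]
      constructor
      · rintro (⟨k, hk, hfk⟩ | hft)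
        · exact ⟨k, by omega, hfk⟩
        · exact ⟨t, by omega, hft⟩
      · rintro ⟨k, hk, hfk⟩
        rcases Nat.lt_succ_iff_lt_or_eq.1 hk with h | h
        · exact Or.inl ⟨k, h, hfk⟩
        · exact Or.inr (h ▸ hfk)

lemma rangeB_iff {f : ℕ → ℕ} (hf : StrictMono f) (m : ℕ) :
    rangeB f m = true ↔ m ∈ Set.range f := by
  rw [rangeB, rangeB_aux f m (m + 1)]
  constructor
  · rintro ⟨k, _, hfk⟩; exact ⟨k, hfk⟩
  · rintro ⟨k, hfk⟩
    exact ⟨k, by have : k ≤ f k := hf.le_apply; omega, hfk⟩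

lemma rangeB_computable {f : ℕ → ℕ} (hfc : Computable f) : Computable (rangeB f) := by
  have hc : Computable fun q : ℕ × (ℕ × Bool) => q.2.2 := Computable.snd.comp Computable.snd
  have hd : Computable fun q : ℕ × (ℕ × Bool) => decide (f q.2.1 = q.1) :=
    (Primrec₂.to_comp Primrec.eq.decide).comp
      (hfc.comp (Computable.fst.comp Computable.snd)) Computable.fst
  have H := Computable.cond hc (Computable.const true) hd
  have h := Computable.nat_rec (Computable.succ) (Computable.const false)
    (show Computable₂ (fun (a : ℕ) (p : ℕ × Bool) => cond p.2 true (decide (f p.1 = a))) from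
      Computable₂.mk H)
  apply h.of_eq
  intro m
  show Nat.rec false (fun y IH => cond IH true (decide (f y = m))) (m + 1) = rangeB f m
  rw [rangeB]
  have key : ∀ t, (Nat.rec false (fun y IH => cond IH true (decide (f y = m))) t : Bool)
      = Nat.rec false (fun k ih => ih || decide (f k = m)) t := by
    intro t
    induction t with
    | zero => rfl
    | succ t iht =>
        show cond (Nat.rec false _ t) true (decide (f t = m)) = _
        rw [iht]
        cases hb : (Nat.rec false (fun k ih => ih || decide (f k = m)) t : Bool) <;> simp [hb]
  exact key (m + 1)

section Construction

/-- insertion positions: squares `(k+1)²` with `cb k = true` -/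
def insB (cb : ℕ → Bool) (m : ℕ) : Bool :=
  cond (decide (Nat.sqrt m * Nat.sqrt m = m)) (cond (decide (0 < m)) (cb (Nat.sqrt m - 1)) false)
    false

/-- the listing function -/
def Lfun (f g : ℕ → ℕ) (cb : ℕ → Bool) (m : ℕ) : ℕ :=
  cond (insB cb m) (g (Nat.sqrt m - 1)) (f (cntF (insB cb) m))

variable {f g : ℕ → ℕ} {cb : ℕ → Bool}

lemma insB_spec {m : ℕ} (h : insB cb m = true) :
    0 < m ∧ Nat.sqrt m * Nat.sqrt m = m ∧ cb (Nat.sqrt m - 1) = true := by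
  unfold insB at h
  rcases h1 : decide (Nat.sqrt m * Nat.sqrt m = m) with _ | _ <;> rw [h1] at h
  · simp at h
  · rcases h2 : decide (0 < m) with _ | _ <;> rw [h2] at h
    · simp at h
    · exact ⟨of_decide_eq_true h2, of_decide_eq_true h1, h⟩

lemma insB_square (k : ℕ) : insB cb ((k + 1) * (k + 1)) = cb k := by
  have h1 : Nat.sqrt ((k + 1) * (k + 1)) = k + 1 := Nat.sqrt_eq (k + 1)
  unfold insB
  rw [h1]
  simp

lemma sqrt_pos_of_insB {m : ℕ} (h : insB cb m = true) : 1 ≤ Nat.sqrt m := by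
  rcases insB_spec h with ⟨h0, h1, _⟩
  by_contra hc
  push_neg at hc
  interval_cases h' : Nat.sqrt m
  · omega

lemma card_insB_le_sqrt (cb : ℕ → Bool) (n : ℕ) :
    ((Finset.range n).filter (fun m => insB cb m = true)).card ≤ Nat.sqrt n := by
  have h : ((Finset.range n).filter (fun m => insB cb m = true)).card
      ≤ (Finset.Icc 1 (Nat.sqrt n)).card := by
    apply Finset.card_le_card_of_injOn (fun m => Nat.sqrt m)
    · intro m hm
      simp only [Finset.coe_filter, Set.mem_setOf_eq, Finset.mem_range] at hm
      rcases insB_spec hm.2 with ⟨h0, h1, _⟩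
      have hs1 : 1 ≤ Nat.sqrt m := sqrt_pos_of_insB hm.2
      have hs2 : Nat.sqrt m ≤ Nat.sqrt n := Nat.sqrt_le_sqrt (le_of_lt hm.1)
      exact Finset.mem_Icc.2 ⟨hs1, hs2⟩
    · intro m hm m' hm' hs
      simp only [Finset.coe_filter, Set.mem_setOf_eq, Finset.mem_range] at hm hm'
      rcases insB_spec hm.2 with ⟨_, h1, _⟩
      rcases insB_spec hm'.2 with ⟨_, h1', _⟩
      simp only at hs
      rw [← h1, ← h1', hs]
  simpa using h

lemma cntF_insB_ge (cb : ℕ → Bool) (n : ℕ) : n ≤ cntF (insB cb) n + Nat.sqrt n := by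
  have h1 := cntF_trues (insB cb) n
  have h2 := card_insB_le_sqrt cb n
  have h3 := cntF_le (insB cb) n
  omega

lemma cntF_insB_unbounded (cb : ℕ → Bool) (j : ℕ) : ∃ n, j < cntF (insB cb) n := by
  refine ⟨(j + 2) * (j + 2), ?_⟩
  have h1 := cntF_insB_ge cb ((j + 2) * (j + 2))
  rw [Nat.sqrt_eq (j + 2)] at h1
  nlinarith [h1]

lemma exists_noins (cb : ℕ → Bool) (j : ℕ) :
    ∃ m, insB cb m = false ∧ cntF (insB cb) m = j := by
  obtain ⟨n, hn⟩ := cntF_insB_unbounded cb j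
  exact cntF_surj _ hn

variable (hf : StrictMono f)
  (hg1 : ∀ k, cb k = true → g k ∉ Set.range f)
  (hg2 : ∀ k k', cb k = true → cb k' = true → g k = g k' → k = k')
  (hg3 : ∀ m, m ∉ Set.range f → ∃ k, cb k = true ∧ g k = m)

include hf hg1 hg2 hg3 in
lemma Lfun_bijective : Function.Bijective (Lfun f g cb) := by
  constructor
  · intro m m' h
    unfold Lfun at h
    rcases hm : insB cb m with _ | _ <;> rcases hm' : insB cb m' with _ | _ <;>
      rw [hm, hm'] at h <;> simp only [cond] at h
    · exact cntF_inj _ hm hm' (hf.injective h)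
    · exact absurd ⟨cntF (insB cb) m, h⟩ (hg1 _ (insB_spec hm').2.2)
    · exact absurd ⟨cntF (insB cb) m', h.symm⟩ (hg1 _ (insB_spec hm).2.2)
    · have e := hg2 _ _ (insB_spec hm).2.2 (insB_spec hm').2.2 h
      have s1 := sqrt_pos_of_insB hm
      have s1' := sqrt_pos_of_insB hm'
      have h1 := (insB_spec hm).2.1
      have h1' := (insB_spec hm').2.1
      have : Nat.sqrt m = Nat.sqrt m' := by omega
      rw [← h1, ← h1', this]
  · intro y
    by_cases hy : y ∈ Set.range f
    · obtain ⟨j, hj⟩ := hy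
      obtain ⟨m, hm, hc⟩ := exists_noins cb j
      exact ⟨m, by unfold Lfun; rw [hm, hc]; exact hj⟩
    · obtain ⟨k, hk, hgk⟩ := hg3 y hy
      refine ⟨(k + 1) * (k + 1), ?_⟩
      unfold Lfun
      rw [insB_square, hk]
      rw [Nat.sqrt_eq (k + 1)]
      simpa using hgk

/-- counting relation -/
lemma cnt_Lfun_bounds (Y : Set ℕ) (n : ℕ) :
    cnt {j | f j ∈ Y} (cntF (insB cb) n) ≤ cnt {m | Lfun f g cb m ∈ Y} n ∧
    cnt {m | Lfun f g cb m ∈ Y} n ≤ cnt {j | f j ∈ Y} (cntF (insB cb) n) + Nat.sqrt n := by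
  classical
  set b := insB cb with hb
  set T : Finset ℕ := (Finset.range n).filter (fun m => b m = false ∧ Lfun f g cb m ∈ Y) with hT
  have hTcard : T.card = cnt {j | f j ∈ Y} (cntF b n) := by
    unfold cnt
    apply Finset.card_bij (fun m _ => cntF b m)
    · intro m hm
      simp only [hT, Finset.mem_filter, Finset.mem_range] at hm
      simp only [Finset.mem_filter, Finset.mem_range, Set.mem_setOf_eq]
      refine ⟨cntF_lt b hm.1 hm.2.1, ?_⟩
      have : Lfun f g cb m = f (cntF b m) := by unfold Lfun; rw [← hb, hm.2.1]; rfl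
      rw [← this]; exact hm.2.2
    · intro m hm m' hm' h
      simp only [hT, Finset.mem_filter, Finset.mem_range] at hm hm'
      exact cntF_inj b hm.2.1 hm'.2.1 h
    · intro j hj
      simp only [Finset.mem_filter, Finset.mem_range, Set.mem_setOf_eq] at hj
      obtain ⟨m, hm, hc⟩ := cntF_surj b hj.1
      have hmn : m < n := by
        by_contra hc'
        push_neg at hc'
        have := cntF_mono b hc'
        omega
      refine ⟨m, ?_, hc⟩
      simp only [hT, Finset.mem_filter, Finset.mem_range]
      refine ⟨hmn, hm, ?_⟩
      have : Lfun f g cb m = f (cntF b m) := by unfold Lfun; rw [← hb, hm]; rfl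
      rw [this, hc]; exact hj.2
  constructor
  · rw [← hTcard]
    apply Finset.card_le_card
    intro m hm
    simp only [hT, Finset.mem_filter, Finset.mem_range] at hm ⊢
    simp only [Set.mem_setOf_eq]
    exact ⟨hm.1, hm.2.2⟩
  · have hsub : (Finset.range n).filter (fun m => Lfun f g cb m ∈ Y)
        ⊆ T ∪ (Finset.range n).filter (fun m => b m = true) := by
      intro m hm
      simp only [Finset.mem_filter, Finset.mem_range] at hm
      rcases hbm : b m with _ | _
      · apply Finset.mem_union_left
        simp only [hT, Finset.mem_filter, Finset.mem_range]
        exact ⟨hm.1, hbm, hm.2⟩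
      · apply Finset.mem_union_right
        simp only [Finset.mem_filter, Finset.mem_range]
        exact ⟨hm.1, hbm⟩
    calc cnt {m | Lfun f g cb m ∈ Y} n
        ≤ (T ∪ (Finset.range n).filter (fun m => b m = true)).card :=
          Finset.card_le_card hsub
      _ ≤ T.card + ((Finset.range n).filter (fun m => b m = true)).card :=
          Finset.card_union_le _ _
      _ ≤ cnt {j | f j ∈ Y} (cntF b n) + Nat.sqrt n := by
          rw [hTcard]
          exact Nat.add_le_add_left (card_insB_le_sqrt cb n) _

lemma insB_computable (hcb : Computable cb) : Computable (insB cb) := by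
  have hsq : Primrec Nat.sqrt := Primrec.nat_sqrt
  have h1 : Primrec fun m : ℕ => decide (Nat.sqrt m * Nat.sqrt m = m) :=
    (Primrec.eq.comp (Primrec.nat_mul.comp hsq hsq) Primrec.id).decide
  have h2 : Primrec fun m : ℕ => decide (0 < m) :=
    (Primrec.nat_lt.comp (Primrec.const 0) Primrec.id).decide
  have h3 : Computable fun m : ℕ => cb (Nat.sqrt m - 1) :=
    hcb.comp ((Primrec.nat_sub.comp hsq (Primrec.const 1)).to_comp)
  exact Computable.cond h1.to_comp
    (Computable.cond h2.to_comp h3 (Computable.const false)) (Computable.const false)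

lemma Lfun_computable (hfc : Computable f) (hgc : Computable g) (hcb : Computable cb) :
    Computable (Lfun f g cb) := by
  have hi := insB_computable hcb
  have h1 : Computable fun m : ℕ => g (Nat.sqrt m - 1) :=
    hgc.comp ((Primrec.nat_sub.comp Primrec.nat_sqrt (Primrec.const 1)).to_comp)
  have h2 : Computable fun m : ℕ => f (cntF (insB cb) m) := hfc.comp (cntF_computable hi)
  exact Computable.cond hi h1 h2

end Construction



lemma sqrt_le_half {n : ℕ} (h : 2 ≤ n) : Nat.sqrt n ≤ n / 2 := by
  have hq : 1 ≤ n / 2 := by omega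
  have h1 : n < (n / 2 + 1) * (n / 2 + 1) := by
    have h2 := Nat.div_add_mod n 2
    have h3 : n % 2 < 2 := Nat.mod_lt n (by norm_num)
    nlinarith
  have := Nat.sqrt_lt.2 h1
  omega

lemma nat_sqrt_atTop : Tendsto Nat.sqrt atTop atTop := by
  apply tendsto_atTop.2
  intro b
  refine eventually_atTop.2 ⟨b * b, fun j hj => Nat.le_sqrt.2 hj⟩

lemma tendsto_sqrt6 : Tendsto (fun j : ℕ => (Nat.sqrt (6 * j) : ℝ) / j) atTop (𝓝 0) := by
  have hmain : Tendsto (fun n : ℕ => (Nat.sqrt n : ℝ) / n) atTop (𝓝 0) := by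
    have h1 : Tendsto (fun n : ℕ => ((Nat.sqrt n : ℝ))) atTop atTop :=
      tendsto_natCast_atTop_atTop.comp nat_sqrt_atTop
    have h2 : Tendsto (fun n : ℕ => 1 / (Nat.sqrt n : ℝ)) atTop (𝓝 0) :=
      tendsto_inv_atTop_zero.comp h1 |>.congr (fun n => (one_div _).symm)
    apply tendsto_of_tendsto_of_tendsto_of_le_of_le' tendsto_const_nhds h2
    · exact Eventually.of_forall fun n => by positivity
    · refine eventually_atTop.2 ⟨1, fun n hn => ?_⟩
      have hs : 1 ≤ Nat.sqrt n := Nat.le_sqrt.2 (by omega)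
      have hss : (Nat.sqrt n : ℝ) * (Nat.sqrt n : ℝ) ≤ (n : ℝ) := by
        exact_mod_cast Nat.sqrt_le n
      rw [div_le_div_iff₀ (by exact_mod_cast Nat.lt_of_lt_of_le Nat.zero_lt_one hn)
        (by exact_mod_cast hs)]
      linarith
  have hcomp : Tendsto (fun j : ℕ => (Nat.sqrt (6 * j) : ℝ) / (6 * j : ℕ)) atTop (𝓝 0) := by
    apply hmain.comp
    apply tendsto_atTop.2
    intro b
    exact eventually_atTop.2 ⟨b, fun j hj => by omega⟩
  have h6 := hcomp.const_mul (6 : ℝ)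
  rw [mul_zero] at h6
  apply h6.congr'
  refine eventually_atTop.2 ⟨1, fun j hj => ?_⟩
  have hj0 : (j : ℝ) ≠ 0 := by
    have : (0:ℝ) < j := by exact_mod_cast hj
    exact ne_of_gt this
  show 6 * ((Nat.sqrt (6*j) : ℝ) / ((6 * j : ℕ) : ℝ)) = (Nat.sqrt (6*j) : ℝ) / j
  push_cast
  field_simp

lemma limit_transfer {B LY : Set ℕ} {α : ℝ} {h : ℕ → ℕ}
    (hle : ∀ n, h n ≤ n) (hge : ∀ n, n ≤ h n + Nat.sqrt n)
    (hsurj : ∀ j, ∃ n, h n = j)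
    (hlow : ∀ n, cnt B (h n) ≤ cnt LY n)
    (hup : ∀ n, cnt LY n ≤ cnt B (h n) + Nat.sqrt n)
    (hLY : Tendsto (dens LY) atTop (𝓝 α)) : Tendsto (dens B) atTop (𝓝 α) := by
  classical
  set N : ℕ → ℕ := fun j => Nat.find (hsurj j) with hNdef
  have hN : ∀ j, h (N j) = j := fun j => Nat.find_spec (hsurj j)
  have hN1 : ∀ j, j ≤ N j := by
    intro j
    have := hle (N j)
    rw [hN j] at this
    exact this
  have hN6 : ∀ j, 1 ≤ j → N j ≤ 6 * j := by
    intro j hj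
    rcases le_or_gt (N j) 2 with h2 | h2
    · omega
    · have hs := sqrt_le_half (show 2 ≤ N j by omega)
      have := hge (N j)
      rw [hN j] at this
      omega
  have htends : Tendsto N atTop atTop := tendsto_atTop_mono hN1 tendsto_id
  have hLN : Tendsto (fun j => dens LY (N j)) atTop (𝓝 α) := hLY.comp htends
  have hsq6 := tendsto_sqrt6
  have hsqN : Tendsto (fun j : ℕ => (Nat.sqrt (N j) : ℝ) / j) atTop (𝓝 0) := by
    apply tendsto_of_tendsto_of_tendsto_of_le_of_le' tendsto_const_nhds hsq6
    · exact Eventually.of_forall fun j => by positivity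
    · refine eventually_atTop.2 ⟨1, fun j hj => ?_⟩
      have h1 : Nat.sqrt (N j) ≤ Nat.sqrt (6 * j) := Nat.sqrt_le_sqrt (hN6 j hj)
      apply div_le_div_of_nonneg_right (by exact_mod_cast h1) (Nat.cast_nonneg j)
  have hratio : Tendsto (fun j : ℕ => (N j : ℝ) / j) atTop (𝓝 1) := by
    have hup' : Tendsto (fun j : ℕ => 1 + (Nat.sqrt (6 * j) : ℝ) / j) atTop (𝓝 (1 + 0)) :=
      tendsto_const_nhds.add hsq6
    rw [add_zero] at hup'
    apply tendsto_of_tendsto_of_tendsto_of_le_of_le' tendsto_const_nhds hup'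
    · refine eventually_atTop.2 ⟨1, fun j hj => ?_⟩
      have hj0 : (0 : ℝ) < j := by exact_mod_cast hj
      rw [le_div_iff₀ hj0, one_mul]
      exact_mod_cast hN1 j
    · refine eventually_atTop.2 ⟨1, fun j hj => ?_⟩
      have hj0 : (0 : ℝ) < j := by exact_mod_cast hj
      have h1 : N j ≤ j + Nat.sqrt (6 * j) := by
        have := hge (N j)
        rw [hN j] at this
        have h2 : Nat.sqrt (N j) ≤ Nat.sqrt (6 * j) := Nat.sqrt_le_sqrt (hN6 j hj)
        omega
      rw [div_le_iff₀ hj0, add_mul, one_mul, div_mul_cancel₀ _ (ne_of_gt hj0)]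
      exact_mod_cast h1
  have hcntN : Tendsto (fun j : ℕ => (cnt LY (N j) : ℝ) / j) atTop (𝓝 α) := by
    have hmul := hLN.mul hratio
    rw [mul_one] at hmul
    apply hmul.congr'
    refine eventually_atTop.2 ⟨1, fun j hj => ?_⟩
    have hj0 : (j : ℝ) ≠ 0 := by
      have : (0:ℝ) < j := by exact_mod_cast hj
      exact ne_of_gt this
    have h1 : 1 ≤ N j := le_trans hj (hN1 j)
    have hNj0 : (N j : ℝ) ≠ 0 := by exact_mod_cast (show N j ≠ 0 by omega)
    show dens LY (N j) * ((N j : ℝ) / j) = (cnt LY (N j) : ℝ) / j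
    unfold dens
    field_simp
  have hlow' : Tendsto (fun j : ℕ => (cnt LY (N j) : ℝ) / j - (Nat.sqrt (N j) : ℝ) / j)
      atTop (𝓝 α) := by
    have := hcntN.sub hsqN
    rwa [sub_zero] at this
  apply tendsto_of_tendsto_of_tendsto_of_le_of_le' hlow' hcntN
  · refine eventually_atTop.2 ⟨1, fun j hj => ?_⟩
    have key : cnt LY (N j) ≤ cnt B j + Nat.sqrt (N j) := by
      have := hup (N j); rwa [hN j] at this
    have hcast : (cnt LY (N j) : ℝ) ≤ (cnt B j : ℝ) + (Nat.sqrt (N j) : ℝ) := by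
      exact_mod_cast key
    unfold dens
    rw [sub_le_iff_le_add]
    have : (cnt B j : ℝ) / j + (Nat.sqrt (N j) : ℝ) / j
        = ((cnt B j : ℝ) + (Nat.sqrt (N j) : ℝ)) / j := (add_div _ _ _).symm
    rw [this]
    apply div_le_div_of_nonneg_right (by linarith) (Nat.cast_nonneg j)
  · refine eventually_atTop.2 ⟨1, fun j hj => ?_⟩
    have key : cnt B j ≤ cnt LY (N j) := by
      have := hlow (N j); rwa [hN j] at this
    unfold dens
    apply div_le_div_of_nonneg_right (by exact_mod_cast key) (Nat.cast_nonneg j)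


lemma intrinsic_to_comp {Y : Set ℕ} {α : ℝ} (hY : IntrinsicDensity Y α) : CompDensity Y α := by
  intro f hfc hfm
  obtain ⟨g, cb, hgc, hcbc, hg1, hg2, hg3⟩ :
      ∃ (g : ℕ → ℕ) (cb : ℕ → Bool), Computable g ∧ Computable cb ∧
        (∀ k, cb k = true → g k ∉ Set.range f) ∧
        (∀ k k', cb k = true → cb k' = true → g k = g k' → k = k') ∧
        (∀ m, m ∉ Set.range f → ∃ k, cb k = true ∧ g k = m) := by
    by_cases hinf : {m : ℕ | rangeB f m = false}.Infinite
    · have hFc := rangeB_computable hfc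
      have hcc := cntF_computable hFc
      have hub : ∀ k, ∃ n, k < cntF (rangeB f) n := by
        intro k
        induction k with
        | zero =>
            obtain ⟨m, hm⟩ := hinf.nonempty
            exact ⟨m + 1, by have := cntF_lt (rangeB f) (show m < m + 1 by omega) hm; omega⟩
        | succ k ih =>
            obtain ⟨n, hn⟩ := ih
            obtain ⟨m, hm, hmn⟩ := hinf.exists_gt n
            refine ⟨m + 1, ?_⟩
            have h1 := cntF_mono (rangeB f) (le_of_lt hmn)
            have h2 := cntF_lt (rangeB f) (show m < m + 1 by omega) hm
            omega
      set q : ℕ → ℕ → Bool :=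
        fun k m => cond (rangeB f m) false (decide (cntF (rangeB f) m = k)) with hqd
      have hqiff : ∀ k m, q k m = true ↔ (rangeB f m = false ∧ cntF (rangeB f) m = k) := by
        intro k m
        rw [hqd]
        rcases hb : rangeB f m with _ | _ <;> simp [hb]
      have hex : ∀ k, ∃ m, q k m = true := by
        intro k
        obtain ⟨n, hn⟩ := hub k
        obtain ⟨m, hm, hc⟩ := cntF_surj _ hn
        exact ⟨m, (hqiff k m).2 ⟨hm, hc⟩⟩
      set g : ℕ → ℕ := fun k => Nat.find (hex k) with hgd
      have hspec : ∀ k, rangeB f (g k) = false ∧ cntF (rangeB f) (g k) = k :=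
        fun k => (hqiff k (g k)).1 (Nat.find_spec (hex k))
      have hgcomp : Computable g := by
        have hqc : Computable₂ q := by
          apply Computable₂.mk
          apply Computable.cond (hFc.comp Computable.snd) (Computable.const false)
          exact (Primrec₂.to_comp Primrec.eq.decide).comp (hcc.comp Computable.snd) Computable.fst
        refine (Partrec.rfind hqc.partrec₂).of_eq_tot fun k => ?_
        rw [Nat.mem_rfind]
        constructor
        · exact Part.mem_some_iff.2 (Nat.find_spec (hex k)).symm
        · intro m hm
          refine Part.mem_some_iff.2 ?_
          have hnot := Nat.find_min (hex k) hm
          rcases hb : q k m with _ | _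
          · rfl
          · exact absurd hb hnot
      refine ⟨g, fun _ => true, hgcomp, Computable.const true, ?_, ?_, ?_⟩
      · intro k _
        rw [← rangeB_iff hfm]
        simp [(hspec k).1]
      · intro k k' _ _ hk
        have h1 := (hspec k).2
        have h2 := (hspec k').2
        rw [hk] at h1
        rw [h2] at h1
        exact h1.symm
      · intro m hm
        have hbm : rangeB f m = false := by
          rcases hb : rangeB f m with _ | _
          · rfl
          · exact absurd ((rangeB_iff hfm m).1 hb) hm
        refine ⟨cntF (rangeB f) m, rfl, ?_⟩
        exact cntF_inj _ (hspec _).1 hbm (by rw [(hspec (cntF (rangeB f) m)).2])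
    · have hfin : {m : ℕ | rangeB f m = false}.Finite := Set.not_infinite.1 hinf
      set l : List ℕ := hfin.toFinset.toList with hl
      have hnd : l.Nodup := Finset.nodup_toList _
      have hmem : ∀ m, m ∈ l ↔ rangeB f m = false := by
        intro m
        rw [hl, Finset.mem_toList, Set.Finite.mem_toFinset]
        rfl
      refine ⟨fun k => l.getD k 0, fun k => decide (k < l.length), computable_getD l,
        (Primrec.nat_lt.comp Primrec.id (Primrec.const l.length)).decide.to_comp, ?_, ?_, ?_⟩
      · intro k hk
        have hk' : k < l.length := of_decide_eq_true hk
        show l.getD k 0 ∉ Set.range f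
        have hmem' : l.getD k 0 ∈ l := by
          rw [List.getD_eq_getElem l 0 hk']
          exact List.getElem_mem _
        have hfalse : rangeB f (l.getD k 0) = false := (hmem _).1 hmem'
        intro hr
        have htrue := (rangeB_iff hfm _).2 hr
        rw [hfalse] at htrue
        cases htrue
      · intro k k' hk hk' he
        have h1 : k < l.length := of_decide_eq_true hk
        have h2 : k' < l.length := of_decide_eq_true hk'
        have he' : l.getD k 0 = l.getD k' 0 := he
        rw [List.getD_eq_getElem l 0 h1, List.getD_eq_getElem l 0 h2] at he'
        exact (hnd.getElem_inj_iff).1 he'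
      · intro m hm
        have hbm : rangeB f m = false := by
          rcases hb : rangeB f m with _ | _
          · rfl
          · exact absurd ((rangeB_iff hfm m).1 hb) hm
        have hml : m ∈ l := (hmem m).2 hbm
        obtain ⟨k, hk, hke⟩ := List.mem_iff_getElem.1 hml
        refine ⟨k, decide_eq_true hk, ?_⟩
        show l.getD k 0 = m
        rw [List.getD_eq_getElem l 0 hk]
        exact hke
  have hbij := Lfun_bijective hfm hg1 hg2 hg3
  set E : ℕ ≃ ℕ := Equiv.ofBijective _ hbij with hE
  have hEc : Computable ⇑E := Lfun_computable hfc hgc hcbc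
  have hπc : Computable ⇑E.symm := computable_equiv_symm E hEc
  have hT := hY E.symm hπc
  have hset : ⇑E.symm '' Y = {m | Lfun f g cb m ∈ Y} := by
    ext m
    simp only [Set.mem_image, Set.mem_setOf_eq]
    constructor
    · rintro ⟨y, hy, rfl⟩
      have h1 : Lfun f g cb (E.symm y) = E (E.symm y) := rfl
      rw [h1, Equiv.apply_symm_apply]
      exact hy
    · intro hm
      refine ⟨Lfun f g cb m, hm, ?_⟩
      have h1 : Lfun f g cb m = E m := rfl
      rw [h1, Equiv.symm_apply_apply]
  rw [hset] at hT
  exact limit_transfer (cntF_le _) (cntF_insB_ge cb)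
    (fun j => (exists_noins cb j).imp fun m hm => hm.2)
    (fun n => (cnt_Lfun_bounds Y n).1) (fun n => (cnt_Lfun_bounds Y n).2) hT

lemma dens_sub_le {A B C : Set ℕ} {n : ℕ} (h : cnt A n ≤ cnt B n + cnt C n) :
    dens A n - dens C n ≤ dens B n := by
  unfold dens
  rw [sub_le_iff_le_add, ← add_div]
  apply div_le_div_of_nonneg_right (by exact_mod_cast h) (Nat.cast_nonneg n)

lemma dens_add (A B : Set ℕ) (h : ∀ m, ¬ (m ∈ A ∧ m ∈ B)) (n : ℕ) :
    dens (A ∪ B) n = dens A n + dens B n := by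
  unfold dens
  rw [cnt_disj_union h, ← add_div]
  push_cast
  ring

theorem stmt13 (α : ℝ) (hα0 : 0 ≤ α) (hα1 : α ≤ 1)
    (hsep : ∃ X : Set ℕ, CompDensity X 0 ∧ ¬ IntrinsicDensity X 0)
    (hY : ∃ Y : Set ℕ, IntrinsicDensity Y α) :
    ∃ Z : Set ℕ, CompDensity Z α ∧ ¬ IntrinsicDensity Z α := by
  obtain ⟨X, hX0, hXni⟩ := hsep
  obtain ⟨Y, hYint⟩ := hY
  have hYcomp : CompDensity Y α := intrinsic_to_comp hYint
  obtain ⟨π, hπ⟩ := not_forall.1 hXni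
  rw [_root_.not_imp] at hπ
  obtain ⟨hπc, hπn⟩ := hπ
  -- both candidate sets have computable density α
  have hcompU : CompDensity (Y ∪ X) α := by
    intro f hfc hfm
    have hB := hYcomp f hfc hfm
    have hC := hX0 f hfc hfm
    have hsetU : {n | f n ∈ Y ∪ X} = {n | f n ∈ Y} ∪ {n | f n ∈ X} := by
      ext n; simp [Set.mem_union]
    rw [hsetU]
    have hupper : Tendsto (fun n => dens {n | f n ∈ Y} n + dens {n | f n ∈ X} n)
        atTop (𝓝 (α + 0)) := hB.add hC
    rw [add_zero] at hupper
    apply tendsto_of_tendsto_of_tendsto_of_le_of_le hB hupper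
    · intro n
      exact dens_le_dens (cnt_mono_set Set.subset_union_left n)
    · intro n
      have h1 := cnt_union_le {n | f n ∈ Y} {n | f n ∈ X} n
      show dens _ n ≤ dens {n | f n ∈ Y} n + dens {n | f n ∈ X} n
      unfold dens
      rw [← add_div]
      apply div_le_div_of_nonneg_right (by exact_mod_cast h1) (Nat.cast_nonneg n)
  have hcompD : CompDensity (Y \ X) α := by
    intro f hfc hfm
    have hB := hYcomp f hfc hfm
    have hC := hX0 f hfc hfm
    have hsetD : {n | f n ∈ Y \ X} = {n | f n ∈ Y} \ {n | f n ∈ X} := by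
      ext n; simp [Set.mem_diff]
    rw [hsetD]
    have hlower : Tendsto (fun n => dens {n | f n ∈ Y} n - dens {n | f n ∈ X} n)
        atTop (𝓝 (α - 0)) := hB.sub hC
    rw [sub_zero] at hlower
    apply tendsto_of_tendsto_of_tendsto_of_le_of_le hlower hB
    · intro n
      apply dens_sub_le
      have h1 : {n | f n ∈ Y} ⊆ ({n | f n ∈ Y} \ {n | f n ∈ X}) ∪ {n | f n ∈ X} := by
        intro m hm
        by_cases hx : m ∈ {n | f n ∈ X}
        · exact Or.inr hx
        · exact Or.inl ⟨hm, hx⟩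
      calc cnt {n | f n ∈ Y} n ≤ cnt (({n | f n ∈ Y} \ {n | f n ∈ X}) ∪ {n | f n ∈ X}) n :=
            cnt_mono_set h1 n
        _ ≤ cnt ({n | f n ∈ Y} \ {n | f n ∈ X}) n + cnt {n | f n ∈ X} n := cnt_union_le _ _ n
    · intro n
      exact dens_le_dens (cnt_mono_set Set.diff_subset n)
  -- key disjoint decomposition under the permutation π
  have hdisj : ∀ m, ¬ (m ∈ ⇑π '' (Y \ X) ∧ m ∈ ⇑π '' X) := by
    rintro m ⟨⟨y, hy, hym⟩, ⟨x, hx, hxm⟩⟩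
    have : y = x := π.injective (hym.trans hxm.symm)
    exact hy.2 (this ▸ hx)
  have himg : ⇑π '' (Y ∪ X) = (⇑π '' (Y \ X)) ∪ (⇑π '' X) := by
    rw [← Set.image_union]
    congr 1
    ext m
    by_cases hx : m ∈ X <;> simp [Set.mem_union, Set.mem_diff, hx]
  by_cases hu : Tendsto (dens (⇑π '' (Y ∪ X))) atTop (𝓝 α)
  · refine ⟨Y \ X, hcompD, ?_⟩
    intro hZ
    have hd := hZ π hπc
    have hXten : Tendsto (dens (⇑π '' X)) atTop (𝓝 0) := by
      have hsub : Tendsto (fun n => dens (⇑π '' (Y ∪ X)) n - dens (⇑π '' (Y \ X)) n)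
          atTop (𝓝 (α - α)) := hu.sub hd
      rw [sub_self] at hsub
      apply hsub.congr
      intro n
      rw [himg, dens_add _ _ hdisj]
      ring
    exact hπn hXten
  · exact ⟨Y ∪ X, hcompU, fun hZ => hu (hZ π hπc)⟩
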